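/- arXiv:1812.00862 — 2 statements merged into one kernel-verified Lean document; each statement's English description precedes it below -/
import Mathlib

section
/- A tuple u = (u_1,…,u_S) of functions Ω → ℝ is a local minimizer of the relaxed Potts functional P_{γ,ρ} (i.e., there is ε > 0 such that P_{γ,ρ}(v) ≥ P_{γ,ρ}(u) for all v with ‖v − u‖₂ < ε) if and only if u minimizes the quadratic functional F_ρ(v) = Σ_{s=1}^S (1/S)‖Av_s − f‖₂² + ρ Σ_{1≤s<s'≤S} c_{s,s'}‖v_s − v_{s'}‖₂² over the pattern subspace V(u). -/
open Finset

/-- The discrete image domain `Ω = {0,…,M−1} × {0,…,N−1} ⊆ ℤ²`. -/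
noncomputable def gridDomain (M N : ℕ) : Finset (ℤ × ℤ) :=
  (Finset.Ico (0 : ℤ) (M : ℤ)) ×ˢ (Finset.Ico (0 : ℤ) (N : ℤ))

/-- Pixels of the image domain. -/
abbrev Pix (M N : ℕ) := {p : ℤ × ℤ // p ∈ gridDomain M N}

/-- `‖∇_a u‖₀`: the number of pixels `p ∈ Ω` with `p + a ∈ Ω` and `u (p + a) ≠ u p`. -/
noncomputable def jumpCount (M N : ℕ) (u : Pix M N → ℝ) (a : ℤ × ℤ) : ℕ :=
  Set.ncard {p : Pix M N |
    ∃ h : (p : ℤ × ℤ) + a ∈ gridDomain M N, u ⟨(p : ℤ × ℤ) + a, h⟩ ≠ u p}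

/-- Index set of pairs `s < s'`. -/
abbrev PairIdx (S : ℕ) := {q : Fin S × Fin S // q.1 < q.2}

/-- The pattern subspace `V(u)`: tuples `v` that are constant wherever `u` is constant,
i.e. for every `s` and every pixel `p` with `p + a_s ∈ Ω`, `u_s(p+a_s) = u_s(p)`
implies `v_s(p+a_s) = v_s(p)`. -/
def patternSubspace (M N S : ℕ) (a : Fin S → ℤ × ℤ) (u : Fin S → Pix M N → ℝ) :
    Set (Fin S → Pix M N → ℝ) :=
  {v | ∀ (s : Fin S) (p : Pix M N) (hq : (p : ℤ × ℤ) + a s ∈ gridDomain M N),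
    u s ⟨(p : ℤ × ℤ) + a s, hq⟩ = u s p → v s ⟨(p : ℤ × ℤ) + a s, hq⟩ = v s p}

/-- The quadratic penalty relaxation
`P_{γ,ρ}(u) = Σ_s (1/S)‖Au_s − f‖₂² + γ Σ_s ω_s‖∇_{a_s}u_s‖₀
              + ρ Σ_{s<s'} c_{s,s'}‖u_s − u_{s'}‖₂²`. -/
noncomputable def relaxedPotts (M N m S : ℕ) (a : Fin S → ℤ × ℤ) (ω : Fin S → ℝ)
    (A : (Pix M N → ℝ) →ₗ[ℝ] (Fin m → ℝ)) (f : Fin m → ℝ) (γ ρ : ℝ)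
    (c : Fin S → Fin S → ℝ) (u : Fin S → Pix M N → ℝ) : ℝ :=
  (∑ s, (1 / (S : ℝ)) * ∑ i, (A (u s) i - f i) ^ 2) +
    γ * ∑ s, ω s * (jumpCount M N (u s) (a s) : ℝ) +
    ρ * ∑ q : PairIdx S, c (q : Fin S × Fin S).1 (q : Fin S × Fin S).2 *
      ∑ p, (u (q : Fin S × Fin S).1 p - u (q : Fin S × Fin S).2 p) ^ 2

/-- The quadratic part
`F_ρ(v) = Σ_s (1/S)‖Av_s − f‖₂² + ρ Σ_{s<s'} c_{s,s'}‖v_s − v_{s'}‖₂²`. -/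
noncomputable def Frho (M N m S : ℕ)
    (A : (Pix M N → ℝ) →ₗ[ℝ] (Fin m → ℝ)) (f : Fin m → ℝ) (ρ : ℝ)
    (c : Fin S → Fin S → ℝ) (v : Fin S → Pix M N → ℝ) : ℝ :=
  (∑ s, (1 / (S : ℝ)) * ∑ i, (A (v s) i - f i) ^ 2) +
    ρ * ∑ q : PairIdx S, c (q : Fin S × Fin S).1 (q : Fin S × Fin S).2 *
      ∑ p, (v (q : Fin S × Fin S).1 p - v (q : Fin S × Fin S).2 p) ^ 2

private lemma sum_comb_aux {ι : Type*} (s : Finset ι) (g X Y Z : ι → ℝ) (t : ℝ) :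
    ∑ i ∈ s, g i * (X i + t * (Y i - X i) - t * (1 - t) * Z i)
      = (∑ i ∈ s, g i * X i) + t * ((∑ i ∈ s, g i * Y i) - (∑ i ∈ s, g i * X i))
        - t * (1 - t) * (∑ i ∈ s, g i * Z i) := by
  induction s using Finset.cons_induction with
  | empty => simp
  | cons a s ha ih => simp only [Finset.sum_cons, ih]; ring

set_option maxHeartbeats 1600000 in
/-- `u` is a local minimizer of the relaxed Potts functional `P_{γ,ρ}` if
and only if `u` minimizes the quadratic functional `F_ρ` over the pattern subspace
`V(u)`. -/
theorem local_min_relaxed_potts_iff (M N m S : ℕ)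
    (hM : 1 ≤ M) (hN : 1 ≤ N) (hS : 1 ≤ S)
    (a : Fin S → ℤ × ℤ) (ha : ∀ s, a s ≠ 0)
    (ω : Fin S → ℝ) (hω : ∀ s, 0 < ω s)
    (A : (Pix M N → ℝ) →ₗ[ℝ] (Fin m → ℝ)) (f : Fin m → ℝ)
    (γ : ℝ) (hγ : 0 < γ) (ρ : ℝ) (hρ : 0 < ρ)
    (c : Fin S → Fin S → ℝ) (hc : ∀ s s', 0 ≤ c s s')
    (u : Fin S → Pix M N → ℝ) :
    (∃ ε > (0 : ℝ), ∀ v : Fin S → Pix M N → ℝ,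
        (∑ s, ∑ p, (v s p - u s p) ^ 2) < ε ^ 2 →
          relaxedPotts M N m S a ω A f γ ρ c u ≤ relaxedPotts M N m S a ω A f γ ρ c v)
      ↔ (∀ v ∈ patternSubspace M N S a u,
          Frho M N m S A f ρ c u ≤ Frho M N m S A f ρ c v) := by
  classical
  have hPF : ∀ v, relaxedPotts M N m S a ω A f γ ρ c v
      = Frho M N m S A f ρ c v + γ * ∑ s, ω s * (jumpCount M N (v s) (a s) : ℝ) := by
    intro v; simp only [relaxedPotts, Frho]; ring
  constructor
  · -- local min of P ⇒ min of F on V(u)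
    rintro ⟨ε, hε, hloc⟩ v hvV
    by_cases hvu : v = u
    · subst hvu; exact le_refl _
    set Q : ℝ := ∑ s, ∑ p, (v s p - u s p) ^ 2 with hQdef
    have hQ0 : 0 ≤ Q :=
      Finset.sum_nonneg fun s _ => Finset.sum_nonneg fun p _ => sq_nonneg _
    have hQpos : 0 < Q := by
      rcases hQ0.lt_or_eq with h | h
      · exact h
      exfalso; apply hvu; funext s p
      have hz := (Finset.sum_eq_zero_iff_of_nonneg
        (fun s _ => Finset.sum_nonneg fun p _ => sq_nonneg (v s p - u s p))).1 h.symm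
      have hz2 := (Finset.sum_eq_zero_iff_of_nonneg
        (fun p _ => sq_nonneg (v s p - u s p))).1 (hz s (Finset.mem_univ s))
      have := hz2 p (Finset.mem_univ p)
      have : v s p - u s p = 0 := by
        have h2 := pow_eq_zero_iff (n := 2) (by norm_num) |>.1 this
        exact h2
      linarith [this]
    set r : ℝ := Real.sqrt Q with hrdef
    have hrpos : 0 < r := Real.sqrt_pos.mpr hQpos
    have hr2 : r ^ 2 = Q := Real.sq_sqrt hQ0
    set t : ℝ := min 1 (ε / (2 * r)) with htdef
    have ht0 : 0 < t := lt_min one_pos (by positivity)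
    have ht1 : t ≤ 1 := min_le_left _ _
    set w : Fin S → Pix M N → ℝ := fun s p => u s p + t * (v s p - u s p) with hwdef
    -- closeness of w to u
    have hclose : (∑ s, ∑ p, (w s p - u s p) ^ 2) < ε ^ 2 := by
      have hwQ : (∑ s, ∑ p, (w s p - u s p) ^ 2) = t ^ 2 * Q := by
        simp only [hwdef, add_sub_cancel_left, mul_pow, ← Finset.mul_sum, hQdef]
      rw [hwQ]
      have htle : t ≤ ε / (2 * r) := min_le_right _ _
      have h2r : 0 < 2 * r := by linarith
      have h5 : t * (2 * r) ≤ ε := (le_div_iff₀ h2r).1 htle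
      have h7 : (t * (2 * r)) ^ 2 ≤ ε ^ 2 :=
        pow_le_pow_left₀ (mul_nonneg ht0.le h2r.le) h5 2
      nlinarith [h7, hr2, hε, sq_nonneg t, sq_nonneg ε]
    -- jump count of w at most that of u
    have hjw : ∀ s, jumpCount M N (w s) (a s) ≤ jumpCount M N (u s) (a s) := by
      intro s
      apply Set.ncard_le_ncard _ (Set.toFinite _)
      rintro p ⟨hq, hne⟩
      refine ⟨hq, fun heq => hne ?_⟩
      have hveq := hvV s p hq heq
      simp only [hwdef, heq, hveq]
    have hPw := hloc w hclose
    have hFw : Frho M N m S A f ρ c u ≤ Frho M N m S A f ρ c w := by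
      have hJ : γ * ∑ s, ω s * (jumpCount M N (w s) (a s) : ℝ)
          ≤ γ * ∑ s, ω s * (jumpCount M N (u s) (a s) : ℝ) := by
        apply mul_le_mul_of_nonneg_left _ hγ.le
        exact Finset.sum_le_sum fun s _ =>
          mul_le_mul_of_nonneg_left (Nat.cast_le.mpr (hjw s)) (hω s).le
      have h1 := hPF u; have h2 := hPF w
      linarith [hPw]
    -- quadratic identity
    set Φ : ℝ := (∑ s, (1 / (S : ℝ)) * ∑ i, (A (v s) i - A (u s) i) ^ 2) +
      ρ * ∑ q : PairIdx S, c (q : Fin S × Fin S).1 (q : Fin S × Fin S).2 *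
        ∑ p, ((v (q : Fin S × Fin S).1 p - v (q : Fin S × Fin S).2 p)
          - (u (q : Fin S × Fin S).1 p - u (q : Fin S × Fin S).2 p)) ^ 2 with hΦdef
    have hΦ0 : 0 ≤ Φ := by
      apply add_nonneg
      · exact Finset.sum_nonneg fun s _ => mul_nonneg (by positivity)
          (Finset.sum_nonneg fun i _ => sq_nonneg _)
      · exact mul_nonneg hρ.le (Finset.sum_nonneg fun q _ => mul_nonneg (hc _ _)
          (Finset.sum_nonneg fun p _ => sq_nonneg _))
    have hAw : ∀ s i, A (w s) i = A (u s) i + t * (A (v s) i - A (u s) i) := by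
      intro s i
      have hws : w s = u s + t • (v s - u s) := by
        funext p
        simp [hwdef, Pi.add_apply, Pi.smul_apply, Pi.sub_apply, smul_eq_mul]
      rw [hws, map_add, map_smul, map_sub]
      simp [Pi.add_apply, Pi.smul_apply, Pi.sub_apply, smul_eq_mul]
    have key : Frho M N m S A f ρ c w
        = Frho M N m S A f ρ c u
          + t * (Frho M N m S A f ρ c v - Frho M N m S A f ρ c u)
          - t * (1 - t) * Φ := by
      have h1 : ∀ s : Fin S, ∑ i, (A (w s) i - f i) ^ 2
          = ∑ i, ((1:ℝ) * ((A (u s) i - f i) ^ 2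
            + t * ((A (v s) i - f i) ^ 2 - (A (u s) i - f i) ^ 2)
            - t * (1 - t) * (A (v s) i - A (u s) i) ^ 2)) :=
        fun s => Finset.sum_congr rfl fun i _ => by rw [hAw s i]; ring
      have h2 : ∀ q : PairIdx S,
          ∑ p, (w (q : Fin S × Fin S).1 p - w (q : Fin S × Fin S).2 p) ^ 2
          = ∑ p, ((1:ℝ) * ((u (q : Fin S × Fin S).1 p - u (q : Fin S × Fin S).2 p) ^ 2
            + t * ((v (q : Fin S × Fin S).1 p - v (q : Fin S × Fin S).2 p) ^ 2
              - (u (q : Fin S × Fin S).1 p - u (q : Fin S × Fin S).2 p) ^ 2)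
            - t * (1 - t) * ((v (q : Fin S × Fin S).1 p - v (q : Fin S × Fin S).2 p)
              - (u (q : Fin S × Fin S).1 p - u (q : Fin S × Fin S).2 p)) ^ 2)) :=
        fun q => Finset.sum_congr rfl fun p _ => by simp only [hwdef]; ring
      have hdata : (∑ s, (1 / (S : ℝ)) * ∑ i, (A (w s) i - f i) ^ 2)
          = (∑ s, (1 / (S : ℝ)) * ∑ i, (A (u s) i - f i) ^ 2)
            + t * ((∑ s, (1 / (S : ℝ)) * ∑ i, (A (v s) i - f i) ^ 2)
              - ∑ s, (1 / (S : ℝ)) * ∑ i, (A (u s) i - f i) ^ 2)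
            - t * (1 - t) * ∑ s, (1 / (S : ℝ)) * ∑ i, (A (v s) i - A (u s) i) ^ 2 := by
        rw [← sum_comb_aux Finset.univ (fun s => (1 / (S : ℝ)))
          (fun s => ∑ i, (A (u s) i - f i) ^ 2) (fun s => ∑ i, (A (v s) i - f i) ^ 2)
          (fun s => ∑ i, (A (v s) i - A (u s) i) ^ 2) t]
        refine Finset.sum_congr rfl fun s _ => ?_
        rw [h1 s, sum_comb_aux Finset.univ (fun _ => (1:ℝ))
          (fun i => (A (u s) i - f i) ^ 2) (fun i => (A (v s) i - f i) ^ 2)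
          (fun i => (A (v s) i - A (u s) i) ^ 2) t]
        simp only [one_mul]
      have hcoup : (∑ q : PairIdx S, c (q : Fin S × Fin S).1 (q : Fin S × Fin S).2 *
            ∑ p, (w (q : Fin S × Fin S).1 p - w (q : Fin S × Fin S).2 p) ^ 2)
          = (∑ q : PairIdx S, c (q : Fin S × Fin S).1 (q : Fin S × Fin S).2 *
              ∑ p, (u (q : Fin S × Fin S).1 p - u (q : Fin S × Fin S).2 p) ^ 2)
            + t * ((∑ q : PairIdx S, c (q : Fin S × Fin S).1 (q : Fin S × Fin S).2 *
                ∑ p, (v (q : Fin S × Fin S).1 p - v (q : Fin S × Fin S).2 p) ^ 2)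
              - ∑ q : PairIdx S, c (q : Fin S × Fin S).1 (q : Fin S × Fin S).2 *
                ∑ p, (u (q : Fin S × Fin S).1 p - u (q : Fin S × Fin S).2 p) ^ 2)
            - t * (1 - t) * ∑ q : PairIdx S,
                c (q : Fin S × Fin S).1 (q : Fin S × Fin S).2 *
                ∑ p, ((v (q : Fin S × Fin S).1 p - v (q : Fin S × Fin S).2 p)
                  - (u (q : Fin S × Fin S).1 p - u (q : Fin S × Fin S).2 p)) ^ 2 := by
        rw [← sum_comb_aux Finset.univ
          (fun q : PairIdx S => c (q : Fin S × Fin S).1 (q : Fin S × Fin S).2)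
          (fun q : PairIdx S => ∑ p, (u (q : Fin S × Fin S).1 p - u (q : Fin S × Fin S).2 p) ^ 2)
          (fun q : PairIdx S => ∑ p, (v (q : Fin S × Fin S).1 p - v (q : Fin S × Fin S).2 p) ^ 2)
          (fun q : PairIdx S => ∑ p, ((v (q : Fin S × Fin S).1 p - v (q : Fin S × Fin S).2 p)
            - (u (q : Fin S × Fin S).1 p - u (q : Fin S × Fin S).2 p)) ^ 2) t]
        refine Finset.sum_congr rfl fun q _ => ?_
        rw [h2 q, sum_comb_aux Finset.univ (fun _ => (1:ℝ))
          (fun p => (u (q : Fin S × Fin S).1 p - u (q : Fin S × Fin S).2 p) ^ 2)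
          (fun p => (v (q : Fin S × Fin S).1 p - v (q : Fin S × Fin S).2 p) ^ 2)
          (fun p => ((v (q : Fin S × Fin S).1 p - v (q : Fin S × Fin S).2 p)
            - (u (q : Fin S × Fin S).1 p - u (q : Fin S × Fin S).2 p)) ^ 2) t]
        simp only [one_mul]
      simp only [Frho, hΦdef]
      rw [hdata, hcoup]
      ring
    -- conclude F u ≤ F v
    rw [key] at hFw
    have h3 : 0 ≤ t * (Frho M N m S A f ρ c v - Frho M N m S A f ρ c u)
        - t * (1 - t) * Φ := by linarith
    have h4 : 0 ≤ t * (1 - t) * Φ :=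
      mul_nonneg (mul_nonneg ht0.le (by linarith)) hΦ0
    have h5 : t * 0 ≤ t * (Frho M N m S A f ρ c v - Frho M N m S A f ρ c u) := by
      rw [mul_zero]; linarith
    have h6 := (mul_le_mul_iff_right₀ ht0).mp h5
    linarith
  · -- min of F on V(u) ⇒ local min of P
    intro hmin
    have hne : (Finset.univ : Finset (Fin S)).Nonempty := ⟨⟨0, hS⟩, Finset.mem_univ _⟩
    set ωmin : ℝ := Finset.univ.inf' hne ω with hωmindef
    have hωminpos : 0 < ωmin := (Finset.lt_inf'_iff hne).mpr fun s _ => hω s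
    -- continuity of Frho at u
    have hA : Continuous A := A.continuous_of_finiteDimensional
    have hcont : Continuous (Frho M N m S A f ρ c) := by
      unfold Frho
      apply Continuous.add
      · apply continuous_finset_sum; intro s _
        apply Continuous.mul continuous_const
        apply continuous_finset_sum; intro i _
        exact (((continuous_apply i).comp (hA.comp (continuous_apply s))).sub
          continuous_const).pow 2
      · apply Continuous.mul continuous_const
        apply continuous_finset_sum; intro q _
        apply Continuous.mul continuous_const
        apply continuous_finset_sum; intro p _
        fun_prop
    obtain ⟨η, hη, hηball⟩ := Metric.continuousAt_iff.mp (hcont.continuousAt (x := u))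
      (γ * ωmin) (by positivity)
    -- the jump gap δ
    set D : Finset (Fin S × Pix M N) := Finset.univ.filter
      (fun sp => ∃ h : (sp.2 : ℤ × ℤ) + a sp.1 ∈ gridDomain M N,
        u sp.1 ⟨(sp.2 : ℤ × ℤ) + a sp.1, h⟩ ≠ u sp.1 sp.2) with hDdef
    set g : Fin S × Pix M N → ℝ := fun sp =>
      if h : (sp.2 : ℤ × ℤ) + a sp.1 ∈ gridDomain M N then
        |u sp.1 ⟨(sp.2 : ℤ × ℤ) + a sp.1, h⟩ - u sp.1 sp.2| else 1 with hgdef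
    set δ : ℝ := if hDne : D.Nonempty then D.inf' hDne g else 1 with hδdef
    have hδpos : 0 < δ := by
      rw [hδdef]; split_ifs with h
      · rw [Finset.lt_inf'_iff]
        rintro sp hsp
        obtain ⟨-, hq, hne'⟩ := Finset.mem_filter.mp hsp
        rw [hgdef]; dsimp only; rw [dif_pos hq]
        exact abs_pos.mpr (sub_ne_zero.mpr hne')
      · norm_num
    have hδle : ∀ s (p : Pix M N) (hq : (p : ℤ × ℤ) + a s ∈ gridDomain M N),
        u s ⟨(p : ℤ × ℤ) + a s, hq⟩ ≠ u s p →
        δ ≤ |u s ⟨(p : ℤ × ℤ) + a s, hq⟩ - u s p| := by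
      intro s p hq hne'
      have hmem : (s, p) ∈ D := Finset.mem_filter.mpr ⟨Finset.mem_univ _, hq, hne'⟩
      have hDne : D.Nonempty := ⟨_, hmem⟩
      rw [hδdef, dif_pos hDne]
      have h1 := Finset.inf'_le (s := D) g hmem
      rw [hgdef] at h1; dsimp only at h1; rw [dif_pos hq] at h1
      exact h1
    refine ⟨min (δ / 2) η, lt_min (by linarith) hη, ?_⟩
    intro v hvQ
    have hεpos : 0 < min (δ / 2) η := lt_min (by linarith) hη
    have hco : ∀ s p, |v s p - u s p| < min (δ / 2) η := by
      intro s p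
      have h1 : (v s p - u s p) ^ 2 ≤ ∑ s, ∑ p, (v s p - u s p) ^ 2 := by
        calc (v s p - u s p) ^ 2
            ≤ ∑ p, (v s p - u s p) ^ 2 :=
              Finset.single_le_sum (f := fun p' => (v s p' - u s p') ^ 2)
                (fun p' _ => sq_nonneg _) (Finset.mem_univ p)
          _ ≤ _ := Finset.single_le_sum
              (f := fun s => ∑ p, (v s p - u s p) ^ 2)
              (fun s _ => Finset.sum_nonneg fun p _ => sq_nonneg _) (Finset.mem_univ s)
      have h2 : (v s p - u s p) ^ 2 < (min (δ / 2) η) ^ 2 := lt_of_le_of_lt h1 hvQ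
      nlinarith [sq_abs (v s p - u s p), abs_nonneg (v s p - u s p), hεpos]
    have hpres : ∀ s (p : Pix M N) (hq : (p : ℤ × ℤ) + a s ∈ gridDomain M N),
        u s ⟨(p : ℤ × ℤ) + a s, hq⟩ ≠ u s p →
        v s ⟨(p : ℤ × ℤ) + a s, hq⟩ ≠ v s p := by
      intro s p hq hne' heq
      have h1 := hδle s p hq hne'
      have h2 := hco s ⟨(p : ℤ × ℤ) + a s, hq⟩
      have h3 := hco s p
      have hm : min (δ / 2) η ≤ δ / 2 := min_le_left _ _
      have h4 := abs_sub_le (u s ⟨(p : ℤ × ℤ) + a s, hq⟩) (v s p) (u s p)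
      have h5 : |u s ⟨(p : ℤ × ℤ) + a s, hq⟩ - v s p|
          = |v s ⟨(p : ℤ × ℤ) + a s, hq⟩ - u s ⟨(p : ℤ × ℤ) + a s, hq⟩| := by
        rw [← heq, abs_sub_comm]
      linarith
    have hdist : dist v u < η := by
      rw [dist_pi_lt_iff hη]; intro s
      rw [dist_pi_lt_iff hη]; intro p
      rw [Real.dist_eq]
      exact lt_of_lt_of_le (hco s p) (min_le_right _ _)
    by_cases hvV : v ∈ patternSubspace M N S a u
    · have hcnt : ∀ s, jumpCount M N (v s) (a s) = jumpCount M N (u s) (a s) := by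
        intro s; unfold jumpCount; congr 1
        ext p; constructor
        · rintro ⟨hq, hne'⟩; exact ⟨hq, fun h => hne' (hvV s p hq h)⟩
        · rintro ⟨hq, hne'⟩; exact ⟨hq, hpres s p hq hne'⟩
      have h1 := hmin v hvV
      simp only [hPF, hcnt]
      linarith
    · simp only [patternSubspace, Set.mem_setOf_eq] at hvV
      push_neg at hvV
      obtain ⟨s₀, p₀, hq₀, hueq, hvne⟩ := hvV
      have hle : ∀ s, jumpCount M N (u s) (a s) ≤ jumpCount M N (v s) (a s) := by
        intro s
        apply Set.ncard_le_ncard _ (Set.toFinite _)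
        rintro p ⟨hq, hne'⟩
        exact ⟨hq, hpres s p hq hne'⟩
      have hlt : jumpCount M N (u s₀) (a s₀) + 1 ≤ jumpCount M N (v s₀) (a s₀) := by
        have hnotmem : p₀ ∉ {p : Pix M N |
            ∃ h : (p : ℤ × ℤ) + a s₀ ∈ gridDomain M N,
              u s₀ ⟨(p : ℤ × ℤ) + a s₀, h⟩ ≠ u s₀ p} := by
          rintro ⟨hq, hne'⟩; exact hne' hueq
        have hins : insert p₀ {p : Pix M N |
            ∃ h : (p : ℤ × ℤ) + a s₀ ∈ gridDomain M N,
              u s₀ ⟨(p : ℤ × ℤ) + a s₀, h⟩ ≠ u s₀ p}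
            ⊆ {p : Pix M N | ∃ h : (p : ℤ × ℤ) + a s₀ ∈ gridDomain M N,
              v s₀ ⟨(p : ℤ × ℤ) + a s₀, h⟩ ≠ v s₀ p} := by
          rintro p hp
          rcases Set.mem_insert_iff.mp hp with rfl | ⟨hq, hne'⟩
          · exact ⟨hq₀, hvne⟩
          · exact ⟨hq, hpres s₀ p hq hne'⟩
        calc jumpCount M N (u s₀) (a s₀) + 1
            = (insert p₀ {p : Pix M N |
                ∃ h : (p : ℤ × ℤ) + a s₀ ∈ gridDomain M N,
                  u s₀ ⟨(p : ℤ × ℤ) + a s₀, h⟩ ≠ u s₀ p}).ncard :=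
              (Set.ncard_insert_of_notMem hnotmem (Set.toFinite _)).symm
          _ ≤ _ := Set.ncard_le_ncard hins (Set.toFinite _)
      have hsum : (∑ s, ω s * (jumpCount M N (u s) (a s) : ℝ)) + ωmin
          ≤ ∑ s, ω s * (jumpCount M N (v s) (a s) : ℝ) := by
        have hterm : ∀ s ∈ Finset.univ,
            ω s * (jumpCount M N (u s) (a s) : ℝ) + (if s = s₀ then ωmin else 0)
              ≤ ω s * (jumpCount M N (v s) (a s) : ℝ) := by
          intro s _
          by_cases hs : s = s₀
          · subst hs
            rw [if_pos rfl]
            have hc1 : ((jumpCount M N (u s) (a s) : ℝ) + 1)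
                ≤ (jumpCount M N (v s) (a s) : ℝ) := by exact_mod_cast hlt
            have hc2 : ωmin ≤ ω s := Finset.inf'_le ω (Finset.mem_univ s)
            nlinarith [hω s]
          · simp only [if_neg hs, add_zero]
            exact mul_le_mul_of_nonneg_left (Nat.cast_le.mpr (hle s)) (hω s).le
        calc (∑ s, ω s * (jumpCount M N (u s) (a s) : ℝ)) + ωmin
            = ∑ s, (ω s * (jumpCount M N (u s) (a s) : ℝ) + if s = s₀ then ωmin else 0) := by
              rw [Finset.sum_add_distrib, Finset.sum_ite_eq' Finset.univ s₀ (fun _ => ωmin)]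
              simp
          _ ≤ _ := Finset.sum_le_sum hterm
      have hFv := hηball hdist
      rw [Real.dist_eq] at hFv
      have habs := abs_lt.mp hFv
      have hmul : γ * ((∑ s, ω s * (jumpCount M N (u s) (a s) : ℝ)) + ωmin)
          ≤ γ * ∑ s, ω s * (jumpCount M N (v s) (a s) : ℝ) :=
        mul_le_mul_of_nonneg_left hsum hγ.le
      rw [mul_add] at hmul
      simp only [hPF]
      linarith [habs.1]
end

section
/- Let u = (u_1,…,u_S) be a local minimizer of the relaxed Potts functional P_{γ,ρ}, and suppose μ* satisfies the duality identity inf{ Σ_{s}(1/S)‖Av_s − f‖₂² : v ∈ V(u), Cv = 0 } = inf_{v ∈ V(u)} ( Σ_{s}(1/S)‖Av_s − f‖₂² + ⟨μ*, Cv⟩ ). Then the components of u are close in the sense that Σ_{1≤s<s'≤S} c_{s,s'} ‖u_s − u_{s'}‖₂² ≤ ( ‖μ*‖₂ / ρ )². -/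
open Finset

lemma quad_aux (α β δ ε : ℝ) (hδ : 0 ≤ δ) (hε : 0 < ε)
    (h : ∀ t : ℝ, 0 < t → t < ε → α ≤ α + β * t + δ * t ^ 2) : α ≤ α + β + δ := by
  have hβ : 0 ≤ β := by
    by_contra hb
    push_neg at hb
    set t := min (ε / 2) (-β / (2 * (δ + 1))) with ht
    have hδ1 : 0 < 2 * (δ + 1) := by linarith
    have ht0 : 0 < t := lt_min (by linarith) (by apply div_pos <;> linarith)
    have htε : t < ε := lt_of_le_of_lt (min_le_left _ _) (by linarith)
    have h1 := h t ht0 htε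
    have ht2 : t ≤ -β / (2 * (δ + 1)) := min_le_right _ _
    have ht3 : t * (2 * (δ + 1)) ≤ -β := (le_div_iff₀ hδ1).mp ht2
    have hδt : δ * t ≤ -β / 2 := by nlinarith
    have h4 : δ * t ^ 2 ≤ (-β / 2) * t := by nlinarith
    nlinarith
  linarith

lemma sum_expand {ι : Type*} [Fintype ι] (x y : ι → ℝ) (t : ℝ) :
    ∑ i, (x i + t * y i) ^ 2 =
      ∑ i, x i ^ 2 + t * ∑ i, 2 * x i * y i + t ^ 2 * ∑ i, y i ^ 2 := by
  rw [Finset.mul_sum, Finset.mul_sum, ← Finset.sum_add_distrib, ← Finset.sum_add_distrib]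
  exact Finset.sum_congr rfl fun i _ => by ring

lemma sum_mul_expand {ι : Type*} [Fintype ι] (k X Y Z : ι → ℝ) (t : ℝ) :
    ∑ i, k i * (X i + t * Y i + t ^ 2 * Z i) =
      ∑ i, k i * X i + t * ∑ i, k i * Y i + t ^ 2 * ∑ i, k i * Z i := by
  rw [Finset.mul_sum, Finset.mul_sum, ← Finset.sum_add_distrib, ← Finset.sum_add_distrib]
  exact Finset.sum_congr rfl fun i _ => by ring

/-- The data fidelity `g(v) = Σ_s (1/S)‖Av_s − f‖₂²`. -/
noncomputable def gfun (M N m S : ℕ)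
    (A : (Pix M N → ℝ) →ₗ[ℝ] (Fin m → ℝ)) (f : Fin m → ℝ)
    (v : Fin S → Pix M N → ℝ) : ℝ :=
  ∑ s, (1 / (S : ℝ)) * ∑ i, (A (v s) i - f i) ^ 2

/-- The constraint map `C` with components `(Cv)_{(s,s')} = √(c_{s,s'})(v_s − v_{s'})`. -/
noncomputable def Cmap (M N S : ℕ) (c : Fin S → Fin S → ℝ)
    (v : Fin S → Pix M N → ℝ) : PairIdx S → Pix M N → ℝ :=
  fun q p => Real.sqrt (c (q : Fin S × Fin S).1 (q : Fin S × Fin S).2) *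
    (v (q : Fin S × Fin S).1 p - v (q : Fin S × Fin S).2 p)

/-- The Euclidean inner product on pair-indexed families of functions on `Ω`. -/
noncomputable def pinner (M N S : ℕ) (x y : PairIdx S → Pix M N → ℝ) : ℝ :=
  ∑ q, ∑ p, x q p * y q p

set_option maxHeartbeats 2000000 in
/-- if `u` is a local minimizer of the relaxed Potts functional `P_{γ,ρ}`
and `μ*` satisfies the Lagrange duality identity for minimizing the data term over
`V(u) ∩ ker C`, then `Σ_{s<s'} c_{s,s'}‖u_s − u_{s'}‖₂² ≤ (‖μ*‖₂/ρ)²`. -/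
theorem local_min_components_close (M N m S : ℕ)
    (hM : 1 ≤ M) (hN : 1 ≤ N) (hS : 1 ≤ S)
    (a : Fin S → ℤ × ℤ) (ha : ∀ s, a s ≠ 0)
    (ω : Fin S → ℝ) (hω : ∀ s, 0 < ω s)
    (A : (Pix M N → ℝ) →ₗ[ℝ] (Fin m → ℝ)) (f : Fin m → ℝ)
    (γ : ℝ) (hγ : 0 < γ) (ρ : ℝ) (hρ : 0 < ρ)
    (c : Fin S → Fin S → ℝ) (hc : ∀ s s', 0 ≤ c s s')
    (hcnz : ∃ q : PairIdx S, c (q : Fin S × Fin S).1 (q : Fin S × Fin S).2 ≠ 0)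
    (u : Fin S → Pix M N → ℝ)
    (hlocmin : ∃ ε > (0 : ℝ), ∀ v : Fin S → Pix M N → ℝ,
      (∑ s, ∑ p, (v s p - u s p) ^ 2) < ε ^ 2 →
        relaxedPotts M N m S a ω A f γ ρ c u ≤ relaxedPotts M N m S a ω A f γ ρ c v)
    (μstar : PairIdx S → Pix M N → ℝ)
    (hdual : sInf {r : ℝ | ∃ v ∈ patternSubspace M N S a u,
        Cmap M N S c v = 0 ∧ r = gfun M N m S A f v} =
      sInf {r : ℝ | ∃ v ∈ patternSubspace M N S a u,
        r = gfun M N m S A f v + pinner M N S μstar (Cmap M N S c v)}) :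
    (∑ q : PairIdx S, c (q : Fin S × Fin S).1 (q : Fin S × Fin S).2 *
        ∑ p, (u (q : Fin S × Fin S).1 p - u (q : Fin S × Fin S).2 p) ^ 2) ≤
      (Real.sqrt (∑ q, ∑ p, μstar q p ^ 2) / ρ) ^ 2 := by
  classical
  set G : (Fin S → Pix M N → ℝ) → ℝ := gfun M N m S A f with hGdef
  set K : (Fin S → Pix M N → ℝ) → ℝ := fun v =>
    ∑ q : PairIdx S, c (q : Fin S × Fin S).1 (q : Fin S × Fin S).2 *
      ∑ p, (v (q : Fin S × Fin S).1 p - v (q : Fin S × Fin S).2 p) ^ 2 with hKdef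
  have hKnn : ∀ v, 0 ≤ K v := fun v =>
    Finset.sum_nonneg fun q _ => mul_nonneg (hc _ _)
      (Finset.sum_nonneg fun p _ => sq_nonneg _)
  have hGnn : ∀ v, 0 ≤ G v := fun v =>
    Finset.sum_nonneg fun s _ => mul_nonneg (by positivity)
      (Finset.sum_nonneg fun i _ => sq_nonneg _)
  -- Step A : u globally minimizes G + ρ K over the pattern subspace
  have stepA : ∀ v ∈ patternSubspace M N S a u, G u + ρ * K u ≤ G v + ρ * K v := by
    intro v hv
    obtain ⟨ε, hε, hmin⟩ := hlocmin
    set w : Fin S → Pix M N → ℝ := fun s p => v s p - u s p with hw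
    set z : ℝ → Fin S → Pix M N → ℝ := fun t s p => u s p + t * w s p with hz
    have hz1 : z 1 = v := by
      funext s p; simp only [hz, hw]; ring
    have hzmem : ∀ t, z t ∈ patternSubspace M N S a u := by
      intro t s p hq hueq
      have hveq := hv s p hq hueq
      simp only [hz, hw, hueq, hveq]
    have hjump : ∀ t s, (jumpCount M N (z t s) (a s) : ℝ)
        ≤ (jumpCount M N (u s) (a s) : ℝ) := by
      intro t s
      have hsub : {p : Pix M N | ∃ h : (p : ℤ × ℤ) + a s ∈ gridDomain M N,
            z t s ⟨(p : ℤ × ℤ) + a s, h⟩ ≠ z t s p} ⊆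
          {p : Pix M N | ∃ h : (p : ℤ × ℤ) + a s ∈ gridDomain M N,
            u s ⟨(p : ℤ × ℤ) + a s, h⟩ ≠ u s p} := by
        rintro p ⟨h, hne⟩
        exact ⟨h, fun heq => hne (hzmem t s p h heq)⟩
      exact_mod_cast Set.ncard_le_ncard hsub (Set.toFinite _)
    set β : ℝ := (∑ s, (1 / (S : ℝ)) * ∑ i, 2 * (A (u s) i - f i) * A (w s) i) +
      ρ * ∑ q : PairIdx S, c (q : Fin S × Fin S).1 (q : Fin S × Fin S).2 *
        ∑ p, 2 * (u (q : Fin S × Fin S).1 p - u (q : Fin S × Fin S).2 p) *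
          (w (q : Fin S × Fin S).1 p - w (q : Fin S × Fin S).2 p) with hβ
    set δ : ℝ := (∑ s, (1 / (S : ℝ)) * ∑ i, (A (w s) i) ^ 2) +
      ρ * ∑ q : PairIdx S, c (q : Fin S × Fin S).1 (q : Fin S × Fin S).2 *
        ∑ p, (w (q : Fin S × Fin S).1 p - w (q : Fin S × Fin S).2 p) ^ 2 with hδ
    have hδnn : 0 ≤ δ := by
      apply add_nonneg
      · exact Finset.sum_nonneg fun s _ => mul_nonneg (by positivity)
          (Finset.sum_nonneg fun i _ => sq_nonneg _)
      · exact mul_nonneg hρ.le (Finset.sum_nonneg fun q _ => mul_nonneg (hc _ _)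
          (Finset.sum_nonneg fun p _ => sq_nonneg _))
    have hquad : ∀ t : ℝ, G (z t) + ρ * K (z t) = (G u + ρ * K u) + β * t + δ * t ^ 2 := by
      intro t
      have hA : ∀ s i, A (z t s) i = A (u s) i + t * A (w s) i := by
        intro s i
        have hzs : z t s = u s + t • w s := rfl
        rw [hzs, map_add, map_smul]
        simp
      have e1 : G (z t) = ∑ s, (1 / (S : ℝ)) *
          ((∑ i, (A (u s) i - f i) ^ 2) + t * (∑ i, 2 * (A (u s) i - f i) * A (w s) i) +
            t ^ 2 * (∑ i, (A (w s) i) ^ 2)) := by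
        rw [hGdef]
        unfold gfun
        refine Finset.sum_congr rfl fun s _ => ?_
        congr 1
        rw [← sum_expand (fun i => A (u s) i - f i) (fun i => A (w s) i) t]
        refine Finset.sum_congr rfl fun i _ => ?_
        rw [hA s i]; ring
      have e2 : K (z t) = ∑ q : PairIdx S,
          c (q : Fin S × Fin S).1 (q : Fin S × Fin S).2 *
          ((∑ p, (u (q : Fin S × Fin S).1 p - u (q : Fin S × Fin S).2 p) ^ 2) +
            t * (∑ p, 2 * (u (q : Fin S × Fin S).1 p - u (q : Fin S × Fin S).2 p) *
              (w (q : Fin S × Fin S).1 p - w (q : Fin S × Fin S).2 p)) +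
            t ^ 2 * (∑ p, (w (q : Fin S × Fin S).1 p - w (q : Fin S × Fin S).2 p) ^ 2)) := by
        rw [hKdef]
        refine Finset.sum_congr rfl fun q _ => ?_
        congr 1
        rw [← sum_expand (fun p => u (q : Fin S × Fin S).1 p - u (q : Fin S × Fin S).2 p)
          (fun p => w (q : Fin S × Fin S).1 p - w (q : Fin S × Fin S).2 p) t]
        refine Finset.sum_congr rfl fun p _ => ?_
        simp only [hz]; ring
      have hGu : G u = ∑ s, (1 / (S : ℝ)) * ∑ i, (A (u s) i - f i) ^ 2 := rfl
      have hKu : K u = ∑ q : PairIdx S, c (q : Fin S × Fin S).1 (q : Fin S × Fin S).2 *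
          ∑ p, (u (q : Fin S × Fin S).1 p - u (q : Fin S × Fin S).2 p) ^ 2 := rfl
      rw [e1, e2, sum_mul_expand, sum_mul_expand, hβ, hδ, hGu, hKu]
      ring
    set D : ℝ := ∑ s, ∑ p, w s p ^ 2 with hD
    have hDnn : 0 ≤ D :=
      Finset.sum_nonneg fun s _ => Finset.sum_nonneg fun p _ => sq_nonneg _
    have hdist : ∀ t : ℝ, (∑ s, ∑ p, (z t s p - u s p) ^ 2) = t ^ 2 * D := by
      intro t
      rw [hD, Finset.mul_sum]
      refine Finset.sum_congr rfl fun s _ => ?_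
      rw [Finset.mul_sum]
      refine Finset.sum_congr rfl fun p _ => ?_
      simp only [hz]; ring
    have hsq : Real.sqrt D ^ 2 = D := Real.sq_sqrt hDnn
    have hsnn : 0 ≤ Real.sqrt D := Real.sqrt_nonneg D
    have hε' : 0 < ε / (Real.sqrt D + 1) := by positivity
    have hkey : G u + ρ * K u ≤ (G u + ρ * K u) + β + δ := by
      refine quad_aux _ _ _ _ hδnn hε' ?_
      intro t ht0 htε
      have h1 : t * (Real.sqrt D + 1) < ε := by
        rw [lt_div_iff₀ (by linarith)] at htε
        linarith
      have hnear : (∑ s, ∑ p, (z t s p - u s p) ^ 2) < ε ^ 2 := by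
        rw [hdist t]
        have h4 : t * Real.sqrt D < ε := by nlinarith
        nlinarith [h4, mul_nonneg ht0.le hsnn, hsq]
      have hPle := hmin (z t) hnear
      have hru : relaxedPotts M N m S a ω A f γ ρ c u =
          G u + γ * (∑ s, ω s * (jumpCount M N (u s) (a s) : ℝ)) + ρ * K u := rfl
      have hrz : relaxedPotts M N m S a ω A f γ ρ c (z t) =
          G (z t) + γ * (∑ s, ω s * (jumpCount M N (z t s) (a s) : ℝ)) + ρ * K (z t) := rfl
      have hJ : γ * (∑ s, ω s * (jumpCount M N (z t s) (a s) : ℝ)) ≤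
          γ * (∑ s, ω s * (jumpCount M N (u s) (a s) : ℝ)) := by
        refine mul_le_mul_of_nonneg_left ?_ hγ.le
        exact Finset.sum_le_sum fun s _ =>
          mul_le_mul_of_nonneg_left (hjump t s) (hω s).le
      rw [hru, hrz] at hPle
      have := hquad t
      linarith
    have := hquad 1
    rw [hz1] at this
    simp only [mul_one, one_pow] at this
    linarith
  -- nonnegativity facts and the infimum bound on the constrained problem
  have h0mem : gfun M N m S A f (fun _ _ => (0 : ℝ)) ∈
      {r : ℝ | ∃ v ∈ patternSubspace M N S a u,
        Cmap M N S c v = 0 ∧ r = gfun M N m S A f v} := by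
    refine ⟨fun _ _ => 0, fun s p hq h => rfl, ?_, rfl⟩
    funext q p
    simp [Cmap]
  have hlow : ∀ r ∈ {r : ℝ | ∃ v ∈ patternSubspace M N S a u,
      Cmap M N S c v = 0 ∧ r = gfun M N m S A f v}, G u + ρ * K u ≤ r := by
    rintro r ⟨v, hv, hCv, rfl⟩
    have hKv : K v = 0 := by
      rw [hKdef]
      refine Finset.sum_eq_zero fun q _ => ?_
      rw [Finset.mul_sum]
      refine Finset.sum_eq_zero fun p _ => ?_
      have hqp : Real.sqrt (c (q : Fin S × Fin S).1 (q : Fin S × Fin S).2) *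
          (v (q : Fin S × Fin S).1 p - v (q : Fin S × Fin S).2 p) = 0 := by
        have := congrFun (congrFun hCv q) p
        simpa [Cmap] using this
      have h2 : (Real.sqrt (c (q : Fin S × Fin S).1 (q : Fin S × Fin S).2) *
          (v (q : Fin S × Fin S).1 p - v (q : Fin S × Fin S).2 p)) ^ 2 = 0 := by
        rw [hqp]; ring
      rw [mul_pow, Real.sq_sqrt (hc _ _)] at h2
      exact h2
    have h3 := stepA v hv
    rw [hKv] at h3
    have : G v = gfun M N m S A f v := rfl
    linarith
  have hInfLHS : G u + ρ * K u ≤ sInf {r : ℝ | ∃ v ∈ patternSubspace M N S a u,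
      Cmap M N S c v = 0 ∧ r = gfun M N m S A f v} :=
    le_csInf ⟨_, h0mem⟩ hlow
  set M2 : ℝ := ∑ q, ∑ p, μstar q p ^ 2 with hM2
  have hM2nn : 0 ≤ M2 :=
    Finset.sum_nonneg fun q _ => Finset.sum_nonneg fun p _ => sq_nonneg _
  have hgoal : (Real.sqrt M2 / ρ) ^ 2 = M2 / ρ ^ 2 := by
    rw [div_pow, Real.sq_sqrt hM2nn]
  show K u ≤ (Real.sqrt M2 / ρ) ^ 2
  rw [hgoal]
  by_cases hbdd : BddBelow {r : ℝ | ∃ v ∈ patternSubspace M N S a u,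
      r = gfun M N m S A f v + pinner M N S μstar (Cmap M N S c v)}
  · have humem : gfun M N m S A f u + pinner M N S μstar (Cmap M N S c u) ∈
        {r : ℝ | ∃ v ∈ patternSubspace M N S a u,
          r = gfun M N m S A f v + pinner M N S μstar (Cmap M N S c v)} :=
      ⟨u, fun s p hq h => h, rfl⟩
    have h2 := csInf_le hbdd humem
    rw [hdual] at hInfLHS
    have hGu : G u = gfun M N m S A f u := rfl
    have key : ρ * K u ≤ pinner M N S μstar (Cmap M N S c u) := by linarith
    -- Cauchy–Schwarz
    have hCS := Finset.sum_mul_sq_le_sq_mul_sq Finset.univ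
      (fun x : PairIdx S × Pix M N => μstar x.1 x.2)
      (fun x : PairIdx S × Pix M N => Cmap M N S c u x.1 x.2)
    have e1 : (∑ x : PairIdx S × Pix M N, μstar x.1 x.2 * Cmap M N S c u x.1 x.2) =
        pinner M N S μstar (Cmap M N S c u) := by
      rw [Fintype.sum_prod_type]; rfl
    have e2 : (∑ x : PairIdx S × Pix M N, μstar x.1 x.2 ^ 2) = M2 := by
      rw [hM2, Fintype.sum_prod_type]
    have e3 : (∑ x : PairIdx S × Pix M N, Cmap M N S c u x.1 x.2 ^ 2) =
        ∑ q : PairIdx S, c (q : Fin S × Fin S).1 (q : Fin S × Fin S).2 *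
          ∑ p, (u (q : Fin S × Fin S).1 p - u (q : Fin S × Fin S).2 p) ^ 2 := by
      rw [Fintype.sum_prod_type]
      refine Finset.sum_congr rfl fun q _ => ?_
      rw [Finset.mul_sum]
      refine Finset.sum_congr rfl fun p _ => ?_
      simp only [Cmap, mul_pow, Real.sq_sqrt (hc _ _)]
    have eKu : K u = ∑ q : PairIdx S, c (q : Fin S × Fin S).1 (q : Fin S × Fin S).2 *
        ∑ p, (u (q : Fin S × Fin S).1 p - u (q : Fin S × Fin S).2 p) ^ 2 := rfl
    rw [e1, e2, e3, ← eKu] at hCS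
    rcases (hKnn u).eq_or_lt with h0 | hpos
    · rw [← h0]
      exact div_nonneg hM2nn (sq_nonneg ρ)
    · rw [le_div_iff₀ (pow_pos hρ 2)]
      have hpi : 0 < pinner M N S μstar (Cmap M N S c u) :=
        lt_of_lt_of_le (mul_pos hρ hpos) key
      nlinarith [key, hCS, hpos, mul_pos hρ hpos,
        mul_nonneg (sub_nonneg.2 key) hpi.le,
        mul_nonneg (sub_nonneg.2 key) (mul_pos hρ hpos).le]
  · have h0 : sInf {r : ℝ | ∃ v ∈ patternSubspace M N S a u,
        r = gfun M N m S A f v + pinner M N S μstar (Cmap M N S c v)} = 0 :=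
      Real.sInf_of_not_bddBelow hbdd
    rw [hdual, h0] at hInfLHS
    have := hGnn u
    have hKu0 : K u ≤ 0 := by nlinarith
    have : (0:ℝ) ≤ M2 / ρ ^ 2 := div_nonneg hM2nn (sq_nonneg ρ)
    linarith
end
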